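/- Each of the three colour classes (the set of red rational unit vectors, the set of white rational unit vectors, and the set of black rational unit vectors) is dense in the unit sphere of EuclideanSpace ℝ (Fin 3). -/

import Mathlib

/-- The colour class of the rational unit vectors in `ℝ³` whose `i`-th reduced
integer coordinate is odd (red for `i = 0`, white for `i = 1`, black for
`i = 2`). -/
def colourClass (i : Fin 3) : Set (EuclideanSpace ℝ (Fin 3)) :=
  {y | ‖y‖ = 1 ∧ ∃ n : Fin 3 → ℤ, ∃ d : ℤ, 0 < d ∧
    Int.gcd (Int.gcd (n 0) (n 1) : ℤ) (n 2) = 1 ∧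
    (∀ j, y j = (n j : ℝ) / (d : ℝ)) ∧ Odd (n i)}

lemma normsq_iff (y : EuclideanSpace ℝ (Fin 3)) (m : Fin 3 → ℤ) (e : ℤ) (he : 0 < e)
    (h : ∀ j, y j = (m j : ℝ) / (e : ℝ)) :
    (‖y‖ = 1 ↔ (m 0)^2 + (m 1)^2 + (m 2)^2 = e^2) := by
  have he' : (e : ℝ) ≠ 0 := by exact_mod_cast he.ne'
  rw [EuclideanSpace.norm_eq, Real.sqrt_eq_one]
  rw [Fin.sum_univ_three]
  simp only [h, Real.norm_eq_abs, sq_abs]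
  rw [div_pow, div_pow, div_pow, ← add_div, ← add_div,
    div_eq_one_iff_eq (by positivity)]
  constructor
  · intro hh; exact_mod_cast hh
  · intro hh; exact_mod_cast hh

/-- Reduction lemma: any rational representation of a unit vector yields a reduced one,
preserving oddness of coordinates. -/
lemma reduce (y : EuclideanSpace ℝ (Fin 3)) (m : Fin 3 → ℤ) (e : ℤ) (he : 0 < e)
    (hy : ‖y‖ = 1) (h : ∀ j, y j = (m j : ℝ) / (e : ℝ)) (hm : ¬ ∀ j, m j = 0) :
    ∃ n : Fin 3 → ℤ, ∃ d : ℤ, 0 < d ∧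
      Int.gcd (Int.gcd (n 0) (n 1) : ℤ) (n 2) = 1 ∧
      (∀ j, y j = (n j : ℝ) / (d : ℝ)) ∧ (∀ j, Odd (m j) → Odd (n j)) := by
  have hsum : (m 0)^2 + (m 1)^2 + (m 2)^2 = e^2 := (normsq_iff y m e he h).mp hy
  set G : ℕ := Int.gcd (Int.gcd (m 0) (m 1) : ℤ) (m 2) with hG
  have hGdvd : ∀ j, (G : ℤ) ∣ m j := by
    intro j
    fin_cases j
    · exact dvd_trans (Int.gcd_dvd_left _ _) (Int.gcd_dvd_left _ _)
    · exact dvd_trans (Int.gcd_dvd_left _ _) (Int.gcd_dvd_right _ _)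
    · exact Int.gcd_dvd_right _ _
  have hGne : (G : ℤ) ≠ 0 := by
    intro h0
    apply hm
    intro j
    have := hGdvd j
    rw [h0] at this
    exact zero_dvd_iff.mp this
  have hGpos : 0 < (G : ℤ) := lt_of_le_of_ne (Int.natCast_nonneg G) (Ne.symm hGne)
  set n : Fin 3 → ℤ := fun j => m j / (G : ℤ) with hn
  have hmn : ∀ j, m j = (G : ℤ) * n j := fun j => by
    rw [hn]; exact (Int.mul_ediv_cancel' (hGdvd j)).symm
  -- G divides e
  have hG2 : (G : ℤ)^2 ∣ e^2 := by
    rw [← hsum, hmn 0, hmn 1, hmn 2]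
    exact ⟨n 0 ^2 + n 1^2 + n 2^2, by ring⟩
  have hGe : (G : ℤ) ∣ e := (Int.pow_dvd_pow_iff two_ne_zero).mp hG2
  set d : ℤ := e / (G : ℤ) with hd
  have hed : e = (G : ℤ) * d := (Int.mul_ediv_cancel' hGe).symm
  have hdpos : 0 < d := by
    rcases lt_trichotomy d 0 with h' | h' | h'
    · nlinarith
    · rw [h'] at hed; simp at hed; omega
    · exact h'
  refine ⟨n, d, hdpos, ?_, ?_, ?_⟩
  · -- gcd of reduced is 1
    set K : ℕ := Int.gcd (Int.gcd (n 0) (n 1) : ℤ) (n 2) with hK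
    have hKdvd : ∀ j, (K : ℤ) ∣ n j := by
      intro j
      fin_cases j
      · exact dvd_trans (Int.gcd_dvd_left _ _) (Int.gcd_dvd_left _ _)
      · exact dvd_trans (Int.gcd_dvd_left _ _) (Int.gcd_dvd_right _ _)
      · exact Int.gcd_dvd_right _ _
    have hKG : ∀ j, ((K * G : ℕ) : ℤ) ∣ m j := by
      intro j
      rw [hmn j]
      push_cast
      rw [mul_comm (K:ℤ) (G:ℤ)]
      exact mul_dvd_mul_left (G:ℤ) (hKdvd j)
    have hdvdG : (K * G : ℕ) ∣ G := by
      have h01 : ((K*G : ℕ) : ℤ) ∣ Int.gcd (m 0) (m 1) := Int.dvd_coe_gcd (hKG 0) (hKG 1)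
      have := Int.dvd_coe_gcd h01 (hKG 2)
      rw [← hG] at this
      exact_mod_cast this
    have hGpos' : 0 < G := by exact_mod_cast hGpos
    have h1 : K * G ≤ G := Nat.le_of_dvd hGpos' hdvdG
    have hK0 : K ≠ 0 := by
      intro h0
      rw [h0, zero_mul] at hdvdG
      exact hGpos'.ne' (Nat.eq_zero_of_zero_dvd hdvdG)
    have hKle : K ≤ 1 := by nlinarith
    omega
  · intro j
    rw [h j, hmn j, hed]
    push_cast
    rw [mul_div_mul_left]
    exact_mod_cast hGne
  · intro j hodd
    rw [hmn j] at hodd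
    rcases Int.even_or_odd (n j) with hev | hodd'
    · exfalso; exact (Int.not_odd_iff_even.mpr (Int.even_mul.mpr (Or.inr hev))) hodd
    · exact hodd'

/-- Lemma B: an odd numerator certifies colour membership. -/
lemma mem_colour (i : Fin 3) (y : EuclideanSpace ℝ (Fin 3)) (m : Fin 3 → ℤ) (e : ℤ)
    (he : 0 < e) (hy : ‖y‖ = 1) (h : ∀ j, y j = (m j : ℝ) / (e : ℝ))
    (hodd : Odd (m i)) : y ∈ colourClass i := by
  have hm : ¬ ∀ j, m j = 0 := by
    intro hall
    rw [hall i] at hodd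
    simpa using hodd
  obtain ⟨n, d, hd, hgcd, hcoords, hpar⟩ := reduce y m e he hy h hm
  exact ⟨hy, n, d, hd, hgcd, hcoords, hpar i hodd⟩

/-- Lemma A: a rational point of the unit sphere lies in some colour class. -/
lemma mem_some_colour (y : EuclideanSpace ℝ (Fin 3)) (m : Fin 3 → ℤ) (e : ℤ)
    (he : 0 < e) (hy : ‖y‖ = 1) (h : ∀ j, y j = (m j : ℝ) / (e : ℝ)) :
    ∃ i, y ∈ colourClass i := by
  have hm : ¬ ∀ j, m j = 0 := by
    intro hall
    have : (m 0)^2 + (m 1)^2 + (m 2)^2 = e^2 := (normsq_iff y m e he h).mp hy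
    rw [hall 0, hall 1, hall 2] at this
    nlinarith
  obtain ⟨n, d, hd, hgcd, hcoords, hpar⟩ := reduce y m e he hy h hm
  have : ∃ i, Odd (n i) := by
    by_contra hodd
    push_neg at hodd
    have hev : ∀ i, (2:ℤ) ∣ n i := fun i => by
      rcases Int.even_or_odd (n i) with hev | ho
      · exact hev.two_dvd
      · exact absurd ho (hodd i)
    have h2 : (2:ℤ) ∣ (Int.gcd (Int.gcd (n 0) (n 1) : ℤ) (n 2) : ℤ) :=
      Int.dvd_coe_gcd (Int.dvd_coe_gcd (hev 0) (hev 1)) (hev 2)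
    rw [hgcd] at h2
    norm_num at h2
  obtain ⟨i, hi⟩ := this
  exact ⟨i, hy, n, d, hd, hgcd, hcoords, hi⟩

/-- Inverse stereographic projection from the north pole. -/
noncomputable def stereo (u v : ℝ) : EuclideanSpace ℝ (Fin 3) :=
  (WithLp.equiv 2 (Fin 3 → ℝ)).symm
    ![2*u/(u^2+v^2+1), 2*v/(u^2+v^2+1), (u^2+v^2-1)/(u^2+v^2+1)]

lemma stereo_apply (u v : ℝ) (j : Fin 3) :
    stereo u v j = ![2*u/(u^2+v^2+1), 2*v/(u^2+v^2+1), (u^2+v^2-1)/(u^2+v^2+1)] j := by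
  rw [stereo]; rfl

lemma stereo_cont : Continuous (fun p : ℝ × ℝ => stereo p.1 p.2) := by
  apply (PiLp.continuous_toLp 2 (fun _ : Fin 3 => ℝ)).comp
  refine continuous_pi ?_
  intro j
  have hden : ∀ p : ℝ × ℝ, p.1^2 + p.2^2 + 1 ≠ 0 := fun p => by positivity
  fin_cases j <;> simp <;>
    exact Continuous.div (by fun_prop) (by fun_prop) hden

lemma norm_one_sum (x : EuclideanSpace ℝ (Fin 3)) (hx : ‖x‖ = 1) :
    (x 0)^2 + (x 1)^2 + (x 2)^2 = 1 := by
  rw [EuclideanSpace.norm_eq, Real.sqrt_eq_one, Fin.sum_univ_three] at hx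
  simpa [Real.norm_eq_abs, sq_abs] using hx

lemma stereo_eq (x : EuclideanSpace ℝ (Fin 3)) (hx : ‖x‖ = 1) (h2 : x 2 ≠ 1) :
    stereo (x 0 / (1 - x 2)) (x 1 / (1 - x 2)) = x := by
  have hsum := norm_one_sum x hx
  have ht : (1 : ℝ) - x 2 ≠ 0 := fun h => h2 (by linarith [sub_eq_zero.mp h])
  apply (WithLp.equiv 2 (Fin 3 → ℝ)).injective
  funext j
  have : (WithLp.equiv 2 (Fin 3 → ℝ)) x j = x j := rfl
  rw [this]
  have hs : (WithLp.equiv 2 (Fin 3 → ℝ)) (stereo (x 0 / (1 - x 2)) (x 1 / (1 - x 2))) j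
      = ![2*(x 0 / (1 - x 2))/((x 0 / (1 - x 2))^2+(x 1 / (1 - x 2))^2+1),
          2*(x 1 / (1 - x 2))/((x 0 / (1 - x 2))^2+(x 1 / (1 - x 2))^2+1),
          ((x 0 / (1 - x 2))^2+(x 1 / (1 - x 2))^2-1)/((x 0 / (1 - x 2))^2+(x 1 / (1 - x 2))^2+1)] j := by
    rw [stereo, Equiv.apply_symm_apply]
  rw [hs]
  have hden : (x 0 / (1 - x 2))^2+(x 1 / (1 - x 2))^2+1 ≠ 0 := by positivity
  fin_cases j
  · show 2*(x 0 / (1 - x 2))/((x 0 / (1 - x 2))^2+(x 1 / (1 - x 2))^2+1) = x 0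
    field_simp
    ring_nf
    linear_combination (-(x 0) * (1 - x 2) - x 0 * x 2) * hsum
  · show 2*(x 1 / (1 - x 2))/((x 0 / (1 - x 2))^2+(x 1 / (1 - x 2))^2+1) = x 1
    field_simp
    ring_nf
    linear_combination (-(x 1) * (1 - x 2) - x 1 * x 2) * hsum
  · show ((x 0 / (1 - x 2))^2+(x 1 / (1 - x 2))^2-1)/((x 0 / (1 - x 2))^2+(x 1 / (1 - x 2))^2+1) = x 2
    field_simp
    ring_nf
    linear_combination (1 - x 2) * hsum

lemma stereo_rat (q1 q2 : ℚ) : ∃ i, stereo (q1:ℝ) (q2:ℝ) ∈ colourClass i := by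
  set a : ℤ := q1.num * q2.den with ha
  set b : ℤ := q2.num * q1.den with hb
  set c : ℤ := (q1.den : ℤ) * (q2.den : ℤ) with hc
  have hc0 : 0 < c := by positivity
  have hcr : (0:ℝ) < (c:ℝ) := by exact_mod_cast hc0
  set m : Fin 3 → ℤ := ![2*a*c, 2*b*c, a^2+b^2-c^2] with hm
  set e : ℤ := a^2+b^2+c^2 with he
  have he0 : 0 < e := by positivity
  have hq1 : (q1:ℝ) = (a:ℝ) / (c:ℝ) := by
    rw [Rat.cast_def]
    push_cast [ha, hc]
    rw [div_eq_div_iff (by positivity) (by positivity)]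
    ring
  have hq2 : (q2:ℝ) = (b:ℝ) / (c:ℝ) := by
    rw [Rat.cast_def]
    push_cast [hb, hc]
    rw [div_eq_div_iff (by positivity) (by positivity)]
    ring
  have hden : ((q1:ℝ))^2 + ((q2:ℝ))^2 + 1 ≠ 0 := by positivity
  have her : ((e:ℝ)) = ((a:ℝ)^2+(b:ℝ)^2+(c:ℝ)^2) := by push_cast [he]; ring
  have hcoords : ∀ j, stereo (q1:ℝ) (q2:ℝ) j = (m j : ℝ) / (e : ℝ) := by
    intro j
    rw [stereo_apply]
    fin_cases j
    · show 2*(q1:ℝ)/((q1:ℝ)^2+(q2:ℝ)^2+1) = ((m 0 : ℤ) : ℝ) / (e:ℝ)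
      rw [hq1, hq2]
      have : ((m 0 : ℤ):ℝ) = 2*(a:ℝ)*(c:ℝ) := by norm_num [hm]
      rw [this, her]
      field_simp
    · show 2*(q2:ℝ)/((q1:ℝ)^2+(q2:ℝ)^2+1) = ((m 1 : ℤ) : ℝ) / (e:ℝ)
      rw [hq1, hq2]
      have : ((m 1 : ℤ):ℝ) = 2*(b:ℝ)*(c:ℝ) := by norm_num [hm]
      rw [this, her]
      field_simp
    · show ((q1:ℝ)^2+(q2:ℝ)^2-1)/((q1:ℝ)^2+(q2:ℝ)^2+1) = ((m 2 : ℤ) : ℝ) / (e:ℝ)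
      rw [hq1, hq2]
      have : ((m 2 : ℤ):ℝ) = (a:ℝ)^2+(b:ℝ)^2-(c:ℝ)^2 := by simp [hm]
      rw [this, her]
      field_simp
  have hnorm : ‖stereo (q1:ℝ) (q2:ℝ)‖ = 1 := by
    rw [normsq_iff _ m e he0 hcoords]
    show (2*a*c)^2 + (2*b*c)^2 + (a^2+b^2-c^2)^2 = (a^2+b^2+c^2)^2
    ring
  exact mem_some_colour _ m e he0 hnorm hcoords


lemma dist_le_of_coords (y w : EuclideanSpace ℝ (Fin 3)) (B : ℝ)
    (h : ∀ j, |y j - w j| ≤ B) : dist y w ≤ 2 * B := by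
  have hB : 0 ≤ B := le_trans (abs_nonneg _) (h 0)
  rw [EuclideanSpace.dist_eq, Fin.sum_univ_three]
  have hb : ∀ j : Fin 3, dist (y j) (w j) ^ 2 ≤ B ^ 2 := by
    intro j
    rw [Real.dist_eq, sq_abs]
    have := abs_le.mp (h j)
    nlinarith [this.1, this.2]
  have hsum : dist (y 0) (w 0) ^ 2 + dist (y 1) (w 1) ^ 2 + dist (y 2) (w 2) ^ 2
      ≤ (2*B)^2 := by nlinarith [hb 0, hb 1, hb 2]
  calc √(dist (y 0) (w 0) ^ 2 + dist (y 1) (w 1) ^ 2 + dist (y 2) (w 2) ^ 2)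
      ≤ √((2*B)^2) := Real.sqrt_le_sqrt hsum
    _ = 2*B := Real.sqrt_sq (by linarith)

set_option maxHeartbeats 1000000 in
/-- Rotating by the rational rotation about the axis (1,1,1) with parameter `s`
shifts the colour of a rational unit vector by one, moving it by at most `4/s`. -/
lemma shift1 (s : ℤ) (hs : 1 ≤ s) (j : Fin 3) (z : EuclideanSpace ℝ (Fin 3))
    (hz : z ∈ colourClass j) :
    ∃ w ∈ colourClass (j+1), dist z w ≤ 4 / (s:ℝ) := by
  obtain ⟨hz1, n, d, hd, hgcd, hco, hodd⟩ := hz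
  obtain ⟨a, hadef⟩ : ∃ a : ℤ, a = 4*s^2+2*s := ⟨_, rfl⟩
  obtain ⟨P, hPdef⟩ : ∃ P : ℤ, P = 2*s+1 := ⟨_, rfl⟩
  obtain ⟨mm, hmmdef⟩ : ∃ mm : ℤ, mm = -(2*s) := ⟨_, rfl⟩
  obtain ⟨t, htdef⟩ : ∃ t : ℤ, t = 4*s^2+2*s+1 := ⟨_, rfl⟩
  have ht0 : 0 < t := by rw [htdef]; positivity
  obtain ⟨M, hM⟩ : ∃ M : Fin 3 → ℤ, M = ![a*n 0 + mm*n 1 + P*n 2, P*n 0 + a*n 1 + mm*n 2,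
    mm*n 0 + P*n 1 + a*n 2] := ⟨_, rfl⟩
  obtain ⟨e, hedef⟩ : ∃ e : ℤ, e = t*d := ⟨_, rfl⟩
  have he : 0 < e := by rw [hedef]; exact mul_pos ht0 hd
  have hsum : (n 0)^2 + (n 1)^2 + (n 2)^2 = d^2 := (normsq_iff z n d hd hco).mp hz1
  obtain ⟨w, hw⟩ : ∃ w : EuclideanSpace ℝ (Fin 3),
    w = (WithLp.equiv 2 (Fin 3 → ℝ)).symm ![(M 0 : ℝ)/(e:ℝ), (M 1 : ℝ)/(e:ℝ), (M 2 : ℝ)/(e:ℝ)]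
    := ⟨_, rfl⟩
  have hwco : ∀ k, w k = (M k : ℝ) / (e : ℝ) := by
    intro k
    rw [hw]
    fin_cases k <;> simp [hM]
  have hMsum : (M 0)^2 + (M 1)^2 + (M 2)^2 = e^2 := by
    simp only [hM, hedef, hadef, hPdef, hmmdef, htdef, Matrix.cons_val_zero,
      Matrix.cons_val_one, Matrix.head_cons, Matrix.cons_val_two, Matrix.tail_cons]
    linear_combination ((4*s^2+2*s+1)^2) * hsum
  have hw1 : ‖w‖ = 1 := (normsq_iff w M e he hwco).mpr hMsum
  have hP : Odd P := ⟨s, hPdef⟩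
  have ha : Even a := ⟨2*s^2+s, by rw [hadef]; ring⟩
  have hmm : Even mm := ⟨-s, by rw [hmmdef]; ring⟩
  have hoddM : Odd (M (j+1)) := by
    fin_cases j
    · show Odd (M 1)
      have hrw : M 1 = P*n 0 + a*n 1 + mm*n 2 := by simp [hM]
      rw [hrw]
      exact ((hP.mul hodd).add_even (ha.mul_right _)).add_even (hmm.mul_right _)
    · show Odd (M 2)
      have hrw : M 2 = mm*n 0 + P*n 1 + a*n 2 := by simp [hM]
      rw [hrw]
      exact ((hmm.mul_right _).add_odd (hP.mul hodd)).add_even (ha.mul_right _)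
    · show Odd (M 0)
      have hrw : M 0 = a*n 0 + mm*n 1 + P*n 2 := by simp [hM]
      rw [hrw]
      exact ((ha.mul_right _).add (hmm.mul_right _)).add_odd (hP.mul hodd)
  have hmem : w ∈ colourClass (j+1) := mem_colour (j+1) w M e he hw1 hwco hoddM
  -- distance estimate
  have hb0 : |n 0| ≤ d := abs_le.mpr
    ⟨by nlinarith [sq_nonneg (n 0 + d), sq_nonneg (n 1), sq_nonneg (n 2)],
     by nlinarith [sq_nonneg (n 0 - d), sq_nonneg (n 1), sq_nonneg (n 2)]⟩
  have hb1 : |n 1| ≤ d := abs_le.mpr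
    ⟨by nlinarith [sq_nonneg (n 1 + d), sq_nonneg (n 0), sq_nonneg (n 2)],
     by nlinarith [sq_nonneg (n 1 - d), sq_nonneg (n 0), sq_nonneg (n 2)]⟩
  have hb2 : |n 2| ≤ d := abs_le.mpr
    ⟨by nlinarith [sq_nonneg (n 2 + d), sq_nonneg (n 0), sq_nonneg (n 1)],
     by nlinarith [sq_nonneg (n 2 - d), sq_nonneg (n 0), sq_nonneg (n 1)]⟩
  have h0 := abs_le.mp hb0
  have h1 := abs_le.mp hb1
  have h2 := abs_le.mp hb2
  have hsd : (0:ℤ) ≤ 2*s := by linarith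
  have e0 : M 0 = a*n 0 + mm*n 1 + P*n 2 := by simp [hM]
  have e1 : M 1 = P*n 0 + a*n 1 + mm*n 2 := by simp [hM]
  have e2 : M 2 = mm*n 0 + P*n 1 + a*n 2 := by simp [hM]
  have hib : ∀ k, |t * n k - M k| ≤ (4*s+2)*d := by
    intro k
    fin_cases k
    · show |t * n 0 - M 0| ≤ (4*s+2)*d
      rw [e0, htdef, hadef, hmmdef, hPdef]
      refine abs_le.mpr ⟨?_, ?_⟩ <;>
        nlinarith [mul_le_mul_of_nonneg_left h0.1 hsd, mul_le_mul_of_nonneg_left h0.2 hsd,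
          mul_le_mul_of_nonneg_left h1.1 hsd, mul_le_mul_of_nonneg_left h1.2 hsd,
          mul_le_mul_of_nonneg_left h2.1 hsd, mul_le_mul_of_nonneg_left h2.2 hsd]
    · show |t * n 1 - M 1| ≤ (4*s+2)*d
      rw [e1, htdef, hadef, hmmdef, hPdef]
      refine abs_le.mpr ⟨?_, ?_⟩ <;>
        nlinarith [mul_le_mul_of_nonneg_left h0.1 hsd, mul_le_mul_of_nonneg_left h0.2 hsd,
          mul_le_mul_of_nonneg_left h1.1 hsd, mul_le_mul_of_nonneg_left h1.2 hsd,
          mul_le_mul_of_nonneg_left h2.1 hsd, mul_le_mul_of_nonneg_left h2.2 hsd]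
    · show |t * n 2 - M 2| ≤ (4*s+2)*d
      rw [e2, htdef, hadef, hmmdef, hPdef]
      refine abs_le.mpr ⟨?_, ?_⟩ <;>
        nlinarith [mul_le_mul_of_nonneg_left h0.1 hsd, mul_le_mul_of_nonneg_left h0.2 hsd,
          mul_le_mul_of_nonneg_left h1.1 hsd, mul_le_mul_of_nonneg_left h1.2 hsd,
          mul_le_mul_of_nonneg_left h2.1 hsd, mul_le_mul_of_nonneg_left h2.2 hsd]
  have hdr : (0:ℝ) < (d:ℝ) := by exact_mod_cast hd
  have htr : (0:ℝ) < (t:ℝ) := by exact_mod_cast ht0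
  have hcoorddiff : ∀ k, |z k - w k| ≤ (((4*s+2)*d : ℤ) : ℝ) / (((t*d : ℤ)) : ℝ) := by
    intro k
    have hzw : z k - w k = ((t * n k - M k : ℤ) : ℝ) / ((t*d : ℤ) : ℝ) := by
      rw [hco k, hwco k, hedef]
      push_cast
      field_simp
    rw [hzw, abs_div, abs_of_pos (by positivity : (0:ℝ) < ((t*d : ℤ):ℝ))]
    apply div_le_div_of_nonneg_right ?_ (by positivity)
    rw [← Int.cast_abs]
    exact Int.cast_le.mpr (hib k)
  have hdist : dist z w ≤ 2 * ((((4*s+2)*d : ℤ) : ℝ) / (((t*d : ℤ)) : ℝ)) :=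
    dist_le_of_coords z w _ hcoorddiff
  refine ⟨w, hmem, le_trans hdist ?_⟩
  have hsr : (1:ℝ) ≤ (s:ℝ) := by exact_mod_cast hs
  have hsimp : (((4*s+2)*d : ℤ) : ℝ) / (((t*d : ℤ)) : ℝ) = (4*(s:ℝ)+2)/(t:ℝ) := by
    push_cast
    rw [mul_div_mul_right _ _ (ne_of_gt hdr)]
  rw [hsimp]
  rw [mul_div_assoc']
  rw [div_le_div_iff₀ htr (by linarith : (0:ℝ) < (s:ℝ))]
  have htcast : (t:ℝ) = 4*(s:ℝ)^2+2*(s:ℝ)+1 := by rw [htdef]; push_cast; ring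
  rw [htcast]
  nlinarith [hsr, sq_nonneg ((s:ℝ))]

lemma approx (x : EuclideanSpace ℝ (Fin 3)) (hx : ‖x‖ = 1) (ε : ℝ) (hε : 0 < ε) :
    ∃ z, (∃ j, z ∈ colourClass j) ∧ dist x z < ε := by
  by_cases h2 : x 2 = 1
  · -- north pole
    have hsum := norm_one_sum x hx
    have hx0 : x 0 = 0 := by nlinarith [sq_nonneg (x 0), sq_nonneg (x 1)]
    have hx1 : x 1 = 0 := by nlinarith [sq_nonneg (x 0), sq_nonneg (x 1)]
    obtain ⟨q, hq⟩ := exists_rat_gt (max 1 (8/ε))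
    have hq1 : (1:ℝ) ≤ (q:ℝ) := le_of_lt (lt_of_le_of_lt (le_max_left _ _) hq)
    have hq0 : (0:ℝ) < (q:ℝ) := by linarith
    have hqe : 8/ε < (q:ℝ) := lt_of_le_of_lt (le_max_right _ _) hq
    set Q : ℝ := (q:ℝ) with hQ
    refine ⟨stereo Q 0, ?_, ?_⟩
    · obtain ⟨j, hj⟩ := stereo_rat q 0
      refine ⟨j, ?_⟩
      have : ((0:ℚ):ℝ) = (0:ℝ) := by norm_num
      rwa [this] at hj
    · have hcb : ∀ k, |x k - stereo Q 0 k| ≤ 2/Q := by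
        intro k
        have hden : (0:ℝ) < Q^2 + 0^2 + 1 := by positivity
        fin_cases k
        · show |x 0 - stereo Q 0 0| ≤ 2/Q
          rw [stereo_apply, hx0]
          show |0 - 2*Q/(Q^2+0^2+1)| ≤ 2/Q
          rw [zero_sub, abs_neg, abs_of_nonneg (by positivity)]
          rw [div_le_div_iff₀ hden hq0]
          nlinarith
        · show |x 1 - stereo Q 0 1| ≤ 2/Q
          rw [stereo_apply, hx1]
          show |0 - 2*0/(Q^2+0^2+1)| ≤ 2/Q
          simp
          positivity
        · show |x 2 - stereo Q 0 2| ≤ 2/Q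
          rw [stereo_apply, h2]
          show |1 - (Q^2+0^2-1)/(Q^2+0^2+1)| ≤ 2/Q
          have heq : 1 - (Q^2+0^2-1)/(Q^2+0^2+1) = 2/(Q^2+0^2+1) := by
            field_simp
            norm_num
          rw [heq, abs_of_nonneg (by positivity)]
          rw [div_le_div_iff₀ hden hq0]
          nlinarith
      have := dist_le_of_coords x (stereo Q 0) (2/Q) hcb
      have h4Q : 2*(2/Q) < ε := by
        have h8 : 8 < Q * ε := (div_lt_iff₀ hε).mp hqe
        have h24 : 2*(2/Q) = 4/Q := by ring
        rw [h24, div_lt_iff₀ hq0]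
        nlinarith
      linarith
  · -- generic point: stereographic projection
    set u : ℝ := x 0 / (1 - x 2) with hu
    set v : ℝ := x 1 / (1 - x 2) with hv
    have heq : stereo u v = x := stereo_eq x hx h2
    have hcont : ContinuousAt (fun p : ℝ × ℝ => stereo p.1 p.2) (u, v) :=
      stereo_cont.continuousAt
    rw [Metric.continuousAt_iff] at hcont
    obtain ⟨δ, hδ, hball⟩ := hcont ε hε
    obtain ⟨q1, hq1⟩ := exists_rat_near u (half_pos hδ)
    obtain ⟨q2, hq2⟩ := exists_rat_near v (half_pos hδ)
    have hdist : dist ((q1:ℝ), (q2:ℝ)) (u, v) < δ := by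
      rw [Prod.dist_eq]
      apply max_lt
      · rw [Real.dist_eq, abs_sub_comm]; linarith
      · rw [Real.dist_eq, abs_sub_comm]; linarith
    have hz := hball hdist
    simp only at hz
    rw [heq] at hz
    exact ⟨stereo (q1:ℝ) (q2:ℝ), stereo_rat q1 q2, by rw [dist_comm]; exact hz⟩

lemma shift_eps (j : Fin 3) (z : EuclideanSpace ℝ (Fin 3)) (hz : z ∈ colourClass j)
    (η : ℝ) (hη : 0 < η) : ∃ w ∈ colourClass (j+1), dist z w < η := by
  obtain ⟨nn, hnn⟩ := exists_nat_gt (4/η)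
  set s : ℤ := (nn : ℤ) + 1 with hsdef
  have hs1 : 1 ≤ s := by omega
  obtain ⟨w, hw, hd⟩ := shift1 s hs1 j z hz
  refine ⟨w, hw, lt_of_le_of_lt hd ?_⟩
  have hsr : (4/η) < (s:ℝ) := by
    push_cast [hsdef]
    linarith
  have hs0 : (0:ℝ) < (s:ℝ) := lt_of_le_of_lt (by positivity) hsr
  rw [div_lt_iff₀ hs0]
  rw [div_lt_iff₀ hη] at hsr
  nlinarith

/-- Each of the three colour classes of rational unit vectors (red, white,
black) is dense in the unit sphere of `ℝ³`. -/
theorem colour_classes_dense_in_sphere (i : Fin 3)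
    (x : EuclideanSpace ℝ (Fin 3)) (hx : ‖x‖ = 1) :
    x ∈ closure (colourClass i) := by
  rw [Metric.mem_closure_iff]
  intro ε hε
  obtain ⟨z, ⟨j, hzj⟩, hdz⟩ := approx x hx (ε/2) (by positivity)
  have hcase : i = j ∨ i = j + 1 ∨ i = j + 1 + 1 := by
    fin_cases i <;> fin_cases j <;> decide
  rcases hcase with h | h | h
  · exact ⟨z, h ▸ hzj, by linarith⟩
  · obtain ⟨w, hw, hdw⟩ := shift_eps j z hzj (ε/2) (by positivity)
    refine ⟨w, h ▸ hw, ?_⟩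
    calc dist x w ≤ dist x z + dist z w := dist_triangle x z w
      _ < ε := by linarith
  · obtain ⟨w, hw, hdw⟩ := shift_eps j z hzj (ε/4) (by positivity)
    obtain ⟨w2, hw2, hdw2⟩ := shift_eps (j+1) w hw (ε/4) (by positivity)
    refine ⟨w2, h ▸ hw2, ?_⟩
    calc dist x w2 ≤ dist x z + dist z w + dist w w2 :=
      dist_triangle4 x z w w2
      _ < ε := by linarith
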